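/- (σ recursion underlying the birational R-matrix computation.) For every integer m ≥ 2 and every r ∈ ℤ/nℤ, one has σ_{(n−1)(m−1)}^{(r)}(x_1,…,x_m) = Σ_{s=0}^{n−1} ( ∏_{u=s+1}^{n−1} x_1^{(r+u+1)} ) · σ_{(n−1)(m−2)}^{(r+s+1)}(x_1,…,x_{m−1}) · ( ∏_{t=1}^{s} x_m^{(r+m−1+t)} ). -/

import Mathlib

noncomputable section

open Finset MvPolynomial

open Classical in
/-- `τ_k^{(s)}(x_a, …, x_b)` (1-indexed window `a ≤ i ≤ b`): the sum over weakly increasing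
sequences `a ≤ i_1 ≤ ⋯ ≤ i_k ≤ b` in which no value occurs more than `n - 1` times of
`x_{i_1}^{(s)} x_{i_2}^{(s-1)} ⋯ x_{i_k}^{(s-k+1)}`; zero for `k < 0`. -/
def lT (n m a b : ℕ) (k : ℤ) (s : ZMod n) : MvPolynomial (Fin m × ZMod n) ℤ :=
  if 0 ≤ k then
    ∑ f ∈ Finset.univ.filter (fun f : Fin k.toNat → Fin m =>
        Monotone f ∧ (∀ j, a ≤ (f j : ℕ) + 1 ∧ (f j : ℕ) + 1 ≤ b) ∧
        ∀ v : Fin m, (Finset.univ.filter (fun j => f j = v)).card ≤ n - 1),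
      ∏ j : Fin k.toNat, MvPolynomial.X (f j, s - ((j : ℕ) : ZMod n))
  else 0

/-- `σ_k^{(s)}(x_a, …, x_b) = ∑_{i=0}^k x_a^{(s)} x_a^{(s-1)} ⋯ x_a^{(s-i+1)} ·
τ_{k-i}^{(s-i)}(x_{a+1}, …, x_b)`. -/
def lS (n m a b k : ℕ) (s : ZMod n) : MvPolynomial (Fin m × ZMod n) ℤ :=
  ∑ i ∈ Finset.range (k + 1),
    (∏ u ∈ Finset.range i,
      if h : a - 1 < m then MvPolynomial.X ((⟨a - 1, h⟩ : Fin m), s - (u : ZMod n)) else 0) *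
    lT n m (a + 1) b ((k - i : ℕ) : ℤ) (s - (i : ZMod n))

open Classical in
lemma lT_nat (n m a b K : ℕ) (s : ZMod n) :
    lT n m a b (K : ℤ) s =
    ∑ f ∈ Finset.univ.filter (fun f : Fin K → Fin m =>
        Monotone f ∧ (∀ j, a ≤ (f j : ℕ) + 1 ∧ (f j : ℕ) + 1 ≤ b) ∧
        ∀ v : Fin m, (Finset.univ.filter (fun j => f j = v)).card ≤ n - 1),
      ∏ j : Fin K, MvPolynomial.X (f j, s - ((j : ℕ) : ZMod n)) := by
  rw [lT, if_pos (by positivity)]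
  simp only [Int.toNat_natCast]

lemma card_filter_le_fin (K c : ℕ) :
    ((Finset.univ : Finset (Fin K)).filter fun j : Fin K => c ≤ (j : ℕ)).card = K - c := by
  rw [← Nat.card_Ico c K]
  apply Finset.card_bij (fun (j : Fin K) (_ : j ∈ (Finset.univ : Finset (Fin K)).filter
      fun j : Fin K => c ≤ (j : ℕ)) => (j : ℕ))
  · intro j hj; simp only [mem_filter, mem_univ, true_and] at hj
    simp only [Finset.mem_Ico]; exact ⟨hj, j.isLt⟩
  · intro a _ b _ h; exact Fin.val_injective h
  · intro b hb
    simp only [Finset.mem_Ico] at hb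
    exact ⟨⟨b, hb.2⟩, by simp [hb.1], rfl⟩

lemma fiber_iff {K m : ℕ} (f : Fin K → Fin m) (hmono : Monotone f) (top : Fin m)
    (hle : ∀ j, f j ≤ top) (j : Fin K) :
    f j = top ↔ K - ((Finset.univ.filter fun j' => f j' = top).card) ≤ (j : ℕ) := by
  classical
  set t := ((Finset.univ.filter fun j' => f j' = top).card) with ht
  constructor
  · intro h
    have hsub : (Finset.univ.filter fun j' : Fin K => (j : ℕ) ≤ (j' : ℕ)) ⊆
        (Finset.univ.filter fun j' => f j' = top) := by
      intro j' hj'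
      simp only [mem_filter, mem_univ, true_and] at hj' ⊢
      exact le_antisymm (hle j') (h ▸ hmono (by exact hj'))
    have := Finset.card_le_card hsub
    rw [card_filter_le_fin] at this
    have := j.isLt
    omega
  · intro h
    by_contra hne
    have hsub : (Finset.univ.filter fun j' => f j' = top) ⊆
        (Finset.univ.filter fun j' : Fin K => (j : ℕ) + 1 ≤ (j' : ℕ)) := by
      intro j' hj'
      simp only [mem_filter, mem_univ, true_and] at hj' ⊢
      by_contra hc
      have hj'le : j' ≤ j := by omega
      exact hne (le_antisymm (hle j) (hj' ▸ hmono hj'le))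
    have := Finset.card_le_card hsub
    rw [card_filter_le_fin] at this
    have := j.isLt
    omega

lemma lT_eq_zero (n m a b K : ℕ) (ha : 1 ≤ a) (hK : (n - 1) * (b + 1 - a) < K) (s : ZMod n) :
    lT n m a b (K : ℤ) s = 0 := by
  classical
  rw [lT_nat, Finset.filter_eq_empty_iff.mpr, Finset.sum_empty]
  rintro f - ⟨hmono, hwin, hcard⟩
  have hKeq : K = ∑ v : Fin m, ((Finset.univ : Finset (Fin K)).filter fun j => f j = v).card := by
    have := Finset.card_eq_sum_card_fiberwise
      (f := f) (s := (Finset.univ : Finset (Fin K))) (t := (Finset.univ : Finset (Fin m)))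
      (fun x _ => Finset.mem_univ _)
    simpa using this
  set W := (Finset.univ : Finset (Fin m)).filter
    (fun v : Fin m => a ≤ (v : ℕ) + 1 ∧ (v : ℕ) + 1 ≤ b) with hW
  have hsplit : ∑ v : Fin m, ((Finset.univ : Finset (Fin K)).filter fun j => f j = v).card
      = ∑ v ∈ W, ((Finset.univ : Finset (Fin K)).filter fun j => f j = v).card := by
    rw [← Finset.sum_filter_add_sum_filter_not (Finset.univ : Finset (Fin m))
      (fun v : Fin m => a ≤ (v : ℕ) + 1 ∧ (v : ℕ) + 1 ≤ b)]
    have : ∀ v ∈ (Finset.univ : Finset (Fin m)).filter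
        (fun v : Fin m => ¬(a ≤ (v : ℕ) + 1 ∧ (v : ℕ) + 1 ≤ b)),
        ((Finset.univ : Finset (Fin K)).filter fun j => f j = v).card = 0 := by
      intro v hv
      simp only [Finset.mem_filter, Finset.mem_univ, true_and] at hv
      rw [Finset.card_eq_zero, Finset.filter_eq_empty_iff]
      intro j _ hj
      exact hv (hj ▸ hwin j)
    rw [Finset.sum_eq_zero this, add_zero]
  have hbound : ∑ v ∈ W, ((Finset.univ : Finset (Fin K)).filter fun j => f j = v).card
      ≤ W.card * (n - 1) := by
    apply Finset.sum_le_card_nsmul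
    intro v _
    exact hcard v
  have hWcard : W.card ≤ b + 1 - a := by
    have h1 : W.card ≤ (Finset.Ico (a - 1) b).card := by
      apply Finset.card_le_card_of_injOn (Fin.val)
      · intro v hv
        simp only [Finset.mem_coe, hW, Finset.mem_filter, Finset.mem_univ, true_and] at hv
        simp only [Finset.mem_coe, Finset.mem_Ico]; omega
      · intro x _ y _ h; exact Fin.val_injective h
    rw [Nat.card_Ico, (by omega : b - (a - 1) = b + 1 - a)] at h1
    exact h1
  have hfin : K ≤ (n - 1) * (b + 1 - a) := by
    calc K = ∑ v ∈ W, ((Finset.univ : Finset (Fin K)).filter fun j => f j = v).card :=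
          hKeq.trans hsplit
      _ ≤ W.card * (n - 1) := hbound
      _ ≤ (b + 1 - a) * (n - 1) := Nat.mul_le_mul_right _ hWcard
      _ = (n - 1) * (b + 1 - a) := Nat.mul_comm _ _
  exact absurd hK (not_lt.mpr hfin)

lemma lS_step (n m b K : ℕ) (hm : 0 < m) (s : ZMod n)
    (hT : lT n m 2 b ((K + 1 : ℕ) : ℤ) s = 0) :
    lS n m 1 b (K + 1) s = X ((⟨0, hm⟩ : Fin m), s) * lS n m 1 b K (s - 1) := by
  rw [lS, lS, Finset.sum_range_succ']
  have h0 : (∏ u ∈ Finset.range 0,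
      if h : 1 - 1 < m then X ((⟨1 - 1, h⟩ : Fin m), s - (u : ZMod n)) else 0) *
      lT n (m) (1 + 1) b ((K + 1 - 0 : ℕ) : ℤ) (s - ((0 : ℕ) : ZMod n)) = 0 := by
    simpa using hT
  rw [h0, add_zero, Finset.mul_sum]
  apply Finset.sum_congr rfl
  intro i hi
  have hc : ∀ u : ℕ, s - ((u + 1 : ℕ) : ZMod n) = (s - 1) - (u : ZMod n) := by
    intro u; push_cast; ring
  rw [Finset.prod_range_succ']
  simp only [dif_pos hm, hc, Nat.cast_zero, sub_zero]
  have harg : (K + 1 - (i + 1) : ℕ) = (K - i : ℕ) := by omega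
  rw [harg]
  ring

lemma lS_stab (n m : ℕ) (hn : 1 < n) (hm : 2 ≤ m) (d : ℕ) (s : ZMod n) :
    lS n m 1 (m - 1) ((n - 1) * (m - 2) + d) s =
      (∏ u ∈ Finset.range d, X ((⟨0, by have := hn; omega⟩ : Fin m), s - (u : ZMod n))) *
      lS n m 1 (m - 1) ((n - 1) * (m - 2)) (s - (d : ZMod n)) := by
  induction d generalizing s with
  | zero => simp
  | succ d ih =>
    have hm0 : 0 < m := by omega
    have hT : lT n m 2 (m - 1) (((n - 1) * (m - 2) + d + 1 : ℕ) : ℤ) s = 0 := by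
      apply lT_eq_zero n m 2 (m - 1) _ (by omega)
      have h2 : (m - 1) + 1 - 2 = m - 2 := by omega
      rw [h2]
      omega
    have hstep := lS_step n m (m - 1) ((n - 1) * (m - 2) + d) hm0 s hT
    rw [show (n - 1) * (m - 2) + (d + 1) = ((n - 1) * (m - 2) + d) + 1 by omega, hstep, ih (s - 1)]
    have hc : ∀ u : ℕ, s - ((u + 1 : ℕ) : ZMod n) = (s - 1) - (u : ZMod n) := by
      intro u; push_cast; ring
    have hd : (s - 1) - (d : ZMod n) = s - ((d + 1 : ℕ) : ZMod n) := by push_cast; ring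
    rw [Finset.prod_range_succ', hd]
    simp only [hc, Nat.cast_zero, sub_zero]
    ring

open Classical in
lemma lT_split (n m a b : ℕ) (hn : 1 < n) (ha : 1 ≤ a) (hab : a ≤ b) (hb : b ≤ m)
    (K : ℕ) (s : ZMod n) :
    lT n m a b (K : ℤ) s = ∑ t ∈ Finset.range n,
      lT n m a (b - 1) ((K : ℤ) - (t : ℕ)) s *
      ∏ j ∈ Finset.range t,
        X ((⟨b - 1, by omega⟩ : Fin m), s - (K : ZMod n) + 1 + (j : ZMod n)) := by
  classical
  have hb1 : b - 1 < m := by omega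
  rw [lT_nat]
  rw [← Finset.sum_fiberwise_of_maps_to
    (g := fun f : Fin K → Fin m =>
      ((Finset.univ : Finset (Fin K)).filter fun j => f j = ⟨b - 1, hb1⟩).card)
    (t := Finset.range n)
    (fun f hf => by
      simp only [Finset.mem_filter, Finset.mem_univ, true_and] at hf
      simp only [Finset.mem_range]
      exact lt_of_le_of_lt (hf.2.2 ⟨b - 1, hb1⟩) (by omega))]
  apply Finset.sum_congr rfl
  intro t ht
  simp only [Finset.mem_range] at ht
  by_cases htK : t ≤ K
  · -- main case
    have key : ∀ f : Fin K → Fin m, Monotone f →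
        (∀ j, a ≤ (f j : ℕ) + 1 ∧ (f j : ℕ) + 1 ≤ b) →
        ((Finset.univ : Finset (Fin K)).filter fun j => f j = ⟨b - 1, hb1⟩).card = t →
        ∀ j : Fin K, f j = ⟨b - 1, hb1⟩ ↔ K - t ≤ (j : ℕ) := by
      intro f hmono hwin hcnt j
      have hle : ∀ j' : Fin K, f j' ≤ ⟨b - 1, hb1⟩ := by
        intro j'
        have := (hwin j').2
        simp only [Fin.le_def]
        omega
      have h := fiber_iff f hmono ⟨b - 1, hb1⟩ hle j
      rw [hcnt] at h
      exact h
    rw [show ((K : ℤ) - (t : ℕ)) = ((K - t : ℕ) : ℤ) by omega]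
    rw [lT_nat n m a (b - 1) (K - t) s, Finset.sum_mul]
    refine Finset.sum_bij'
      (i := fun (f : Fin K → Fin m) _ =>
        (fun j' : Fin (K - t) => f (Fin.castLE (by omega) j')))
      (j := fun (g : Fin (K - t) → Fin m) _ =>
        (fun j : Fin K => if h : (j : ℕ) < K - t then g ⟨(j : ℕ), h⟩ else ⟨b - 1, hb1⟩))
      ?hi ?hj ?li ?ri ?val
    case hi =>
      intro f hf
      simp only [Finset.mem_filter, Finset.mem_univ, true_and] at hf
      obtain ⟨⟨hmono, hwin, hcard⟩, hcnt⟩ := hf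
      have hiff := key f hmono hwin hcnt
      simp only [Finset.mem_filter, Finset.mem_univ, true_and]
      refine ⟨?_, ?_, ?_⟩
      · intro j1 j2 h12
        exact hmono (Fin.le_def.mpr (Fin.le_def.mp h12))
      · intro j'
        have h1 := hwin (Fin.castLE (by omega) j')
        have hne : ¬ (f (Fin.castLE (by omega) j') = ⟨b - 1, hb1⟩) := by
          rw [hiff]
          simp only [Fin.coe_castLE]
          omega
        have hvne : ((f (Fin.castLE (by omega) j')) : ℕ) ≠ b - 1 :=
          fun hv => hne (Fin.ext hv)
        exact ⟨h1.1, by omega⟩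
      · intro v
        refine le_trans ?_ (hcard v)
        apply Finset.card_le_card_of_injOn (Fin.castLE (by omega))
        · intro j' hj'
          simp only [Finset.mem_coe, Finset.coe_filter, Set.mem_setOf_eq, Finset.mem_filter, Finset.mem_univ, true_and] at hj' ⊢
          exact hj'
        · intro x _ y _ hxy
          exact Fin.castLE_injective _ hxy
    case hj =>
      intro g hg
      simp only [Finset.mem_filter, Finset.mem_univ, true_and] at hg
      obtain ⟨hmono, hwin, hcard⟩ := hg
      have hvtop : ∀ j' : Fin (K - t), g j' ≠ ⟨b - 1, hb1⟩ := by
        intro j' hj'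
        have h2 := (hwin j').2
        rw [hj'] at h2
        simp only at h2
        omega
      have hfib : ∀ j : Fin K,
          ((if h : (j : ℕ) < K - t then g ⟨(j : ℕ), h⟩ else ⟨b - 1, hb1⟩) = ⟨b - 1, hb1⟩)
            ↔ ¬ ((j : ℕ) < K - t) := by
        intro j
        by_cases h : (j : ℕ) < K - t
        · simp only [dif_pos h]
          exact ⟨fun hc => absurd hc (hvtop _), fun hc => absurd h hc⟩
        · simp only [dif_neg h]
          tauto
      have hcnttop : ((Finset.univ : Finset (Fin K)).filter
          (fun j : Fin K => (if h : (j : ℕ) < K - t then g ⟨(j : ℕ), h⟩ else ⟨b - 1, hb1⟩)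
            = ⟨b - 1, hb1⟩)).card = t := by
        have heq : ((Finset.univ : Finset (Fin K)).filter
            (fun j : Fin K => (if h : (j : ℕ) < K - t then g ⟨(j : ℕ), h⟩ else ⟨b - 1, hb1⟩)
              = ⟨b - 1, hb1⟩))
            = ((Finset.univ : Finset (Fin K)).filter fun j : Fin K => K - t ≤ (j : ℕ)) := by
          apply Finset.filter_congr
          intro j _
          simp only [hfib j, not_lt]
        rw [heq, card_filter_le_fin]
        omega
      simp only [Finset.mem_filter, Finset.mem_univ, true_and]
      refine ⟨⟨?_, ?_, ?_⟩, hcnttop⟩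
      · intro j1 j2 h12
        have h12' : (j1 : ℕ) ≤ (j2 : ℕ) := h12
        by_cases h1 : (j1 : ℕ) < K - t
        · by_cases h2 : (j2 : ℕ) < K - t
          · simp only [dif_pos h1, dif_pos h2]
            exact hmono (Fin.mk_le_mk.mpr h12')
          · simp only [dif_pos h1, dif_neg h2]
            have := (hwin ⟨(j1 : ℕ), h1⟩).2
            simp only [Fin.le_def]
            omega
        · have h2 : ¬ ((j2 : ℕ) < K - t) := by omega
          simp only [dif_neg h1, dif_neg h2, le_refl]
      · intro j
        by_cases h : (j : ℕ) < K - t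
        · simp only [dif_pos h]
          have := hwin ⟨(j : ℕ), h⟩
          omega
        · simp only [dif_neg h]
          omega
      · intro v
        by_cases hv : v = ⟨b - 1, hb1⟩
        · subst hv
          rw [hcnttop]
          omega
        · have himg : (((Finset.univ : Finset (Fin (K - t))).filter
              (fun j' => g j' = v)).image Fin.val).card ≤
              ((Finset.univ : Finset (Fin (K - t))).filter (fun j' => g j' = v)).card :=
            Finset.card_image_le
          refine le_trans ?_ (le_trans himg (hcard v))
          apply Finset.card_le_card_of_injOn Fin.val
            (t := ((Finset.univ : Finset (Fin (K - t))).filter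
              (fun j' => g j' = v)).image Fin.val)
          · intro j hj
            simp only [Finset.mem_coe, Finset.coe_filter, Set.mem_setOf_eq, Finset.mem_filter, Finset.mem_univ, true_and] at hj
            by_cases h : (j : ℕ) < K - t
            · rw [dif_pos h] at hj
              simp only [Finset.mem_coe, Finset.mem_image]
              refine ⟨⟨(j : ℕ), h⟩, ?_, rfl⟩
              simp only [Finset.mem_filter, Finset.mem_univ, true_and]
              exact hj
            · rw [dif_neg h] at hj
              exact absurd hj.symm hv
          · intro x _ y _ hxy; exact Fin.val_injective hxy
    case li =>
      intro f hf
      simp only [Finset.mem_filter, Finset.mem_univ, true_and] at hf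
      obtain ⟨⟨hmono, hwin, hcard⟩, hcnt⟩ := hf
      have hiff := key f hmono hwin hcnt
      funext j
      beta_reduce
      by_cases h : (j : ℕ) < K - t
      · rw [dif_pos h]
        exact congrArg f (Fin.ext rfl)
      · rw [dif_neg h]
        exact ((hiff j).mpr (by omega)).symm
    case ri =>
      intro g hg
      funext j'
      beta_reduce
      have h : ((Fin.castLE (by omega : K - t ≤ K) j' : Fin K) : ℕ) < K - t := j'.isLt
      rw [dif_pos h]
      exact congrArg g (Fin.ext rfl)
    case val =>
      intro f hf
      simp only [Finset.mem_filter, Finset.mem_univ, true_and] at hf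
      obtain ⟨⟨hmono, hwin, hcard⟩, hcnt⟩ := hf
      have hiff := key f hmono hwin hcnt
      rw [← Fin.prod_univ_eq_prod_range (fun j => X ((⟨b - 1, hb1⟩ : Fin m),
        s - (K : ZMod n) + 1 + (j : ZMod n))) t] at *
      rw [← Finset.prod_filter_mul_prod_filter_not (Finset.univ : Finset (Fin K))
        (fun j : Fin K => (j : ℕ) < K - t)]
      congr 1
      · apply Finset.prod_bij (i := fun (j : Fin K)
            (hj : j ∈ Finset.univ.filter (fun j : Fin K => (j : ℕ) < K - t)) =>
            (⟨(j : ℕ), (Finset.mem_filter.mp hj).2⟩ : Fin (K - t)))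
        · intro j hj; exact Finset.mem_univ _
        · intro j1 h1 j2 h2 h
          injection h with hval
          exact Fin.ext hval
        · intro j' _
          refine ⟨Fin.castLE (by omega) j', ?_, ?_⟩
          · simp only [Finset.mem_filter, Finset.mem_univ, true_and, Fin.coe_castLE]
            exact j'.isLt
          · exact Fin.ext rfl
        · intro j hj
          rfl
      · rw [Finset.prod_congr rfl (fun j hj => ?_)]
        rotate_left
        · exact fun j : Fin K => X ((⟨b - 1, hb1⟩ : Fin m), s - ((j : ℕ) : ZMod n))
        · simp only [Finset.mem_filter, Finset.mem_univ, true_and, not_lt] at hj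
          rw [(hiff j).mpr hj]
        apply Finset.prod_bij (i := fun (j : Fin K)
            (hj : j ∈ Finset.univ.filter (fun j : Fin K => ¬ (j : ℕ) < K - t)) =>
            (⟨K - 1 - (j : ℕ), by
              have h2 := (Finset.mem_filter.mp hj).2
              simp only [not_lt] at h2
              have := j.isLt
              omega⟩ : Fin t))
        · intro j hj; exact Finset.mem_univ _
        · intro j1 h1 j2 h2 h
          simp only [Finset.mem_filter, Finset.mem_univ, true_and, not_lt] at h1 h2
          have h1' := j1.isLt
          have h2' := j2.isLt
          injection h with hval
          exact Fin.ext (by omega)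
        · intro j' _
          have hj't := j'.isLt
          refine ⟨⟨K - 1 - (j' : ℕ), by omega⟩, ?_, ?_⟩
          · simp only [Finset.mem_filter, Finset.mem_univ, true_and, not_lt]
            omega
          · exact Fin.ext (by simp only; omega)
        · intro j hj
          simp only [Finset.mem_filter, Finset.mem_univ, true_and, not_lt] at hj
          congr 1
          have hjK := j.isLt
          have h1 : ((K - 1 - (j : ℕ) : ℕ) : ZMod n) =
              (K : ZMod n) - 1 - ((j : ℕ) : ZMod n) := by
            push_cast [Nat.cast_sub (by omega : 1 ≤ K), Nat.cast_sub (by omega : (j : ℕ) ≤ K - 1)]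
            ring
          simp only [h1]
          ring
  · -- degenerate case t > K
    rw [lT, if_neg (by omega), zero_mul]
    apply Finset.sum_eq_zero
    intro f hf
    exfalso
    simp only [Finset.mem_filter, Finset.mem_univ, true_and] at hf
    have hle : ((Finset.univ : Finset (Fin K)).filter fun j => f j = ⟨b - 1, hb1⟩).card ≤ K :=
      le_trans (Finset.card_filter_le _ _) (by simp)
    omega

/-- σ recursion: `σ_{(n−1)(m−1)}^{(r)}(x_1,…,x_m)
= Σ_{s=0}^{n−1} (∏_{u=s+1}^{n−1} x_1^{(r+u+1)}) · σ_{(n−1)(m−2)}^{(r+s+1)}(x_1,…,x_{m−1})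
· (∏_{t=1}^{s} x_m^{(r+m−1+t)})`. -/
theorem sigma_recursion (n m : ℕ) (hn : 1 < n) (hm : 2 ≤ m) (r : ZMod n) :
    lS n m 1 m ((n - 1) * (m - 1)) r =
      ∑ s ∈ Finset.range n,
        (∏ u ∈ Finset.Icc (s + 1) (n - 1),
          MvPolynomial.X ((⟨0, by omega⟩ : Fin m), r + (u : ZMod n) + 1)) *
        lS n m 1 (m - 1) ((n - 1) * (m - 2)) (r + (s : ZMod n) + 1) *
        (∏ t ∈ Finset.Icc 1 s,
          MvPolynomial.X ((⟨m - 1, by omega⟩ : Fin m),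
            r + ((m - 1 : ℕ) : ZMod n) + (t : ZMod n))) := by
  classical
  have hm1 : m - 1 < m := by omega
  have h0m : 0 < m := by omega
  set K := (n - 1) * (m - 1) with hKdef
  have hKsplit : K = (n - 1) * (m - 2) + (n - 1) := by
    rw [hKdef, show m - 1 = (m - 2) + 1 by omega, Nat.mul_add, mul_one]
  have hKcast : ((K : ℕ) : ZMod n) = -(((m - 1 : ℕ) : ZMod n)) := by
    rw [hKdef, Nat.cast_mul, Nat.cast_sub (by omega : 1 ≤ n), ZMod.natCast_self]
    ring
  -- Step 1 : expand lS and split each τ by the multiplicity of x_m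
  have h1 : lS n m 1 m K r = ∑ i ∈ Finset.range (K + 1), ∑ t ∈ Finset.range n,
      (∏ u ∈ Finset.range i,
        if h : 1 - 1 < m then X ((⟨1 - 1, h⟩ : Fin m), r - (u : ZMod n)) else 0) *
      (lT n m 2 (m - 1) (((K - i : ℕ) : ℤ) - (t : ℕ)) (r - (i : ZMod n)) *
        ∏ j ∈ Finset.range t,
          X ((⟨m - 1, hm1⟩ : Fin m), r - (K : ZMod n) + 1 + (j : ZMod n))) := by
    rw [lS]
    apply Finset.sum_congr rfl
    intro i hi
    simp only [Finset.mem_range] at hi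
    have hiK : i ≤ K := by omega
    rw [show (1 + 1 : ℕ) = 2 from rfl]
    rw [lT_split n m 2 m hn (by omega) (by omega) (le_refl m) (K - i) (r - (i : ZMod n)),
      Finset.mul_sum]
    apply Finset.sum_congr rfl
    intro t _
    have hcast : (r - (i : ZMod n)) - ((K - i : ℕ) : ZMod n) + 1 = r - (K : ZMod n) + 1 := by
      rw [Nat.cast_sub hiK]
      ring
    congr 2
    apply Finset.prod_congr rfl
    intro j _
    congr 1
    rw [Nat.cast_sub hiK]
    ring
  rw [h1, Finset.sum_comm]
  apply Finset.sum_congr rfl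
  intro t ht
  simp only [Finset.mem_range] at ht
  have htn : t ≤ n - 1 := by omega
  have htK : t ≤ K := by omega
  -- Step 2 : the inner sum is σ_{K-t} times the trailing x_m product
  have h2 : ∑ i ∈ Finset.range (K + 1),
      (∏ u ∈ Finset.range i,
        if h : 1 - 1 < m then X ((⟨1 - 1, h⟩ : Fin m), r - (u : ZMod n)) else 0) *
      (lT n m 2 (m - 1) (((K - i : ℕ) : ℤ) - (t : ℕ)) (r - (i : ZMod n)) *
        ∏ j ∈ Finset.range t,
          X ((⟨m - 1, hm1⟩ : Fin m), r - (K : ZMod n) + 1 + (j : ZMod n)))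
      = lS n m 1 (m - 1) (K - t) r *
        ∏ j ∈ Finset.range t,
          X ((⟨m - 1, hm1⟩ : Fin m), r - (K : ZMod n) + 1 + (j : ZMod n)) := by
    rw [lS, Finset.sum_mul]
    rw [← Finset.sum_subset (Finset.range_subset_range.mpr (by omega : K - t + 1 ≤ K + 1))
      (fun i hi hni => ?_)]
    · apply Finset.sum_congr rfl
      intro i hi
      simp only [Finset.mem_range] at hi
      have harg : ((K - i : ℕ) : ℤ) - (t : ℕ) = ((K - t - i : ℕ) : ℤ) := by
        push_cast
        omega
      rw [harg, show (1 + 1 : ℕ) = 2 from rfl]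
      ring
    · simp only [Finset.mem_range] at hi hni
      have : ¬ ((0 : ℤ) ≤ ((K - i : ℕ) : ℤ) - (t : ℕ)) := by
        push_cast
        omega
      rw [lT, if_neg this, zero_mul, mul_zero]
  rw [h2]
  -- Step 3 : stabilization of σ_{K-t}
  have h3 : lS n m 1 (m - 1) (K - t) r =
      (∏ u ∈ Finset.range (n - 1 - t), X ((⟨0, h0m⟩ : Fin m), r - (u : ZMod n))) *
      lS n m 1 (m - 1) ((n - 1) * (m - 2)) (r - ((n - 1 - t : ℕ) : ZMod n)) := by
    rw [show K - t = (n - 1) * (m - 2) + (n - 1 - t) by omega]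
    exact lS_stab n m hn hm (n - 1 - t) r
  rw [h3]
  -- color bookkeeping
  have hcol : r - ((n - 1 - t : ℕ) : ZMod n) = r + (t : ZMod n) + 1 := by
    rw [Nat.cast_sub htn, Nat.cast_sub (by omega : 1 ≤ n), ZMod.natCast_self]
    ring
  rw [hcol]
  -- the x_1 product
  have hprod1 : (∏ u ∈ Finset.range (n - 1 - t),
        (X ((⟨0, h0m⟩ : Fin m), r - (u : ZMod n)) : MvPolynomial (Fin m × ZMod n) ℤ))
      = ∏ u ∈ Finset.Icc (t + 1) (n - 1),
          X ((⟨0, h0m⟩ : Fin m), r + (u : ZMod n) + 1) := by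
    refine Finset.prod_nbij' (fun u => n - 1 - u) (fun u => n - 1 - u) ?_ ?_ ?_ ?_ ?_
    · intro u hu
      simp only [Finset.mem_range] at hu
      simp only [Finset.mem_Icc]
      omega
    · intro u hu
      simp only [Finset.mem_Icc] at hu
      simp only [Finset.mem_range]
      omega
    · intro u hu
      simp only [Finset.mem_range] at hu
      beta_reduce
      omega
    · intro u hu
      simp only [Finset.mem_Icc] at hu
      beta_reduce
      omega
    · intro u hu
      simp only [Finset.mem_range] at hu
      beta_reduce
      congr 1
      rw [Nat.cast_sub (by omega : u ≤ n - 1), Nat.cast_sub (by omega : 1 ≤ n),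
        ZMod.natCast_self]
      ring
  -- the x_m product
  have hprod2 : (∏ j ∈ Finset.range t,
        (X ((⟨m - 1, hm1⟩ : Fin m), r - (K : ZMod n) + 1 + (j : ZMod n))
          : MvPolynomial (Fin m × ZMod n) ℤ))
      = ∏ t' ∈ Finset.Icc 1 t,
          X ((⟨m - 1, hm1⟩ : Fin m), r + ((m - 1 : ℕ) : ZMod n) + (t' : ZMod n)) := by
    refine Finset.prod_nbij' (fun j => j + 1) (fun t' => t' - 1) ?_ ?_ ?_ ?_ ?_
    · intro j hj
      simp only [Finset.mem_range] at hj
      simp only [Finset.mem_Icc]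
      omega
    · intro t' ht'
      simp only [Finset.mem_Icc] at ht'
      simp only [Finset.mem_range]
      omega
    · intro j _
      beta_reduce
      omega
    · intro t' ht'
      simp only [Finset.mem_Icc] at ht'
      beta_reduce
      omega
    · intro j hj
      beta_reduce
      congr 1
      rw [hKcast]
      push_cast
      ring
  rw [hprod1, hprod2]

end
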